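/- For every n ≥ 1 and 0 ≤ a ≤ n, the operator τ_n = ∏_{j=1}^{n−1} K_j^{j(n−j)} on V_a^n satisfies τ_n = q^{n−a} i_{−1} τ_{n−1} p_{−1} + q^{−a} i_0 τ_{n−1} p_0, where τ_{n−1} = ∏_{j=1}^{n−2} K_j^{j(n−1−j)} acts on V_{a−1}^{n−1} and V_a^{n−1} respectively. -/

import Mathlib

noncomputable section

open scoped TensorProduct

set_option maxHeartbeats 1000000
set_option synthInstance.maxHeartbeats 400000

/-- The ground field `𝔸 = ℚ(q)`. -/
abbrev A : Type := RatFunc ℚ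

/-- The element `q ∈ 𝔸`. -/
def qq : A := RatFunc.X

/-- The set of `a`-element subsets of `{0, 1, …, n-1}` (a model for the
`a`-element subsets of `{1, …, n}`), the basis of `V_a^n`. -/
abbrev BS (n a : ℕ) : Type := {s : Finset ℕ // s ⊆ Finset.range n ∧ s.card = a}

instance BS.fintype (n a : ℕ) : Fintype (BS n a) :=
  Fintype.subtype ((Finset.range n).powerset.filter fun s => s.card = a) (by
    intro s
    simp [Finset.mem_powerset, Finset.mem_filter])

/-- The fundamental representation `V_a^n`, as the `𝔸`-vector space with basis the
`a`-element subsets of an `n`-element set. -/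
abbrev V (n a : ℕ) : Type := BS n a → A

/-- `i₋₁ : V_{a-1}^{n-1} → V_a^n` (here with indices shifted:
`iminus n a : V_a^n → V_{a+1}^{n+1}`), the inclusion of the summand of subsets containing
the new top element `n`. -/
def iminus (n a : ℕ) : V n a →ₗ[A] V (n+1) (a+1) where
  toFun f s := if h : n ∈ s.1 then
      f ⟨s.1.erase n, by
        constructor
        · intro x hx
          have hx' := Finset.mem_erase.mp hx
          have hx2 := s.2.1 hx'.2
          simp only [Finset.mem_range] at hx2 ⊢
          omega
        · rw [Finset.card_erase_of_mem h, s.2.2]; omega⟩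
    else 0
  map_add' f g := by
    funext s
    simp only [Pi.add_apply]
    by_cases h : n ∈ s.1 <;> simp [h]
  map_smul' c f := by
    funext s
    simp only [Pi.smul_apply, smul_eq_mul, RingHom.id_apply]
    by_cases h : n ∈ s.1 <;> simp [h]

/-- `i₀ : V_a^{n-1} → V_a^n` (as `izero n a : V_a^n → V_a^{n+1}`), the inclusion of the
summand of subsets not containing the new top element. -/
def izero (n a : ℕ) : V n a →ₗ[A] V (n+1) a where
  toFun f s := if h : n ∈ s.1 then 0 else
      f ⟨s.1, by
        refine ⟨fun x hx => ?_, s.2.2⟩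
        have hx2 := s.2.1 hx
        simp only [Finset.mem_range] at hx2 ⊢
        rcases Nat.lt_succ_iff_lt_or_eq.mp hx2 with h' | h'
        · exact h'
        · exact absurd (h' ▸ hx) h⟩
  map_add' f g := by
    funext s
    simp only [Pi.add_apply]
    by_cases h : n ∈ s.1 <;> simp [h]
  map_smul' c f := by
    funext s
    simp only [Pi.smul_apply, smul_eq_mul, RingHom.id_apply]
    by_cases h : n ∈ s.1 <;> simp [h]

/-- `p₋₁ : V_a^n → V_{a-1}^{n-1}` (as `pminus n a : V_{a+1}^{n+1} → V_a^n`), the projection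
onto the summand of subsets containing the top element. -/
def pminus (n a : ℕ) : V (n+1) (a+1) →ₗ[A] V n a where
  toFun f t := f ⟨insert n t.1, by
    have hn : n ∉ t.1 := fun h => by
      have := t.2.1 h; simp [Finset.mem_range] at this
    constructor
    · intro x hx
      rcases Finset.mem_insert.mp hx with rfl | hx
      · simp
      · have := t.2.1 hx; simp only [Finset.mem_range] at this ⊢; omega
    · rw [Finset.card_insert_of_notMem hn, t.2.2]⟩
  map_add' f g := rfl
  map_smul' c f := rfl

/-- `p₀ : V_a^n → V_a^{n-1}` (as `pzero n a : V_a^{n+1} → V_a^n`), the projection onto the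
summand of subsets not containing the top element. -/
def pzero (n a : ℕ) : V (n+1) a →ₗ[A] V n a where
  toFun f t := f ⟨t.1, by
    refine ⟨fun x hx => ?_, t.2.2⟩
    have := t.2.1 hx; simp only [Finset.mem_range] at this ⊢; omega⟩
  map_add' f g := rfl
  map_smul' c f := rfl

/-- The diagonal operator on `V_a^n` acting by the scalar `x` on basis subsets containing `m`
and by `y` on those not containing `m`; for `m = n-1` this is `x • i₋₁ p₋₁ + y • i₀ p₀`. -/
def diagOp (n a m : ℕ) (x y : A) : Module.End A (V n a) where
  toFun f s := (if m ∈ s.1 then x else y) * f s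
  map_add' f g := by
    funext s
    simp only [Pi.add_apply]
    ring
  map_smul' c f := by
    funext s
    simp only [Pi.smul_apply, smul_eq_mul, RingHom.id_apply]
    ring

/-- The recursively defined action of the generator `X_i^+` on `V_a^n`
(`XpOp n a i`, where `i` is the literal subscript, `1 ≤ i ≤ n-1`). -/
def XpOp : (n a i : ℕ) → Module.End A (V n a)
  | 0, _, _ => 0
  | 1, _, _ => 0
  | _+2, 0, _ => 0
  | n+2, a+1, i =>
    if a + 1 = n + 2 then 0
    else if i = n + 1 then
      (iminus (n+1) a) ∘ₗ (izero n a) ∘ₗ (pminus n a) ∘ₗ (pzero (n+1) (a+1))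
    else
      (iminus (n+1) a) ∘ₗ (XpOp (n+1) a i) ∘ₗ (pminus (n+1) a)
      + (izero (n+1) (a+1)) ∘ₗ (XpOp (n+1) (a+1) i) ∘ₗ (pzero (n+1) (a+1))

/-- The recursively defined action of the generator `X_i^-` on `V_a^n`. -/
def XmOp : (n a i : ℕ) → Module.End A (V n a)
  | 0, _, _ => 0
  | 1, _, _ => 0
  | _+2, 0, _ => 0
  | n+2, a+1, i =>
    if a + 1 = n + 2 then 0
    else if i = n + 1 then
      (izero (n+1) (a+1)) ∘ₗ (iminus n a) ∘ₗ (pzero n a) ∘ₗ (pminus (n+1) a)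
    else
      (iminus (n+1) a) ∘ₗ (XmOp (n+1) a i) ∘ₗ (pminus (n+1) a)
      + (izero (n+1) (a+1)) ∘ₗ (XmOp (n+1) (a+1) i) ∘ₗ (pzero (n+1) (a+1))

/-- The recursively defined action of the generator `K_i` on `V_a^n`.  The middle factors
`diagOp … 1 q` and `diagOp … q⁻¹ 1` are the operators `i₋₁ p₋₁ + q i₀ p₀` and
`q⁻¹ i₋₁ p₋₁ + i₀ p₀` of the recursion. -/
def KOp : (n a i : ℕ) → Module.End A (V n a)
  | 0, _, _ => 1
  | 1, _, _ => 1
  | _+2, 0, _ => 1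
  | n+2, a+1, i =>
    if a + 1 = n + 2 then 1
    else if i = n + 1 then
      (iminus (n+1) a) ∘ₗ (diagOp (n+1) a n 1 qq) ∘ₗ (pminus (n+1) a)
      + (izero (n+1) (a+1)) ∘ₗ (diagOp (n+1) (a+1) n qq⁻¹ 1) ∘ₗ (pzero (n+1) (a+1))
    else
      (iminus (n+1) a) ∘ₗ (KOp (n+1) a i) ∘ₗ (pminus (n+1) a)
      + (izero (n+1) (a+1)) ∘ₗ (KOp (n+1) (a+1) i) ∘ₗ (pzero (n+1) (a+1))

/-- The recursively defined action of `K_i⁻¹` on `V_a^n` (the inverse of `KOp`),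
given by the same recursion with `q` and `q⁻¹` interchanged. -/
def KinvOp : (n a i : ℕ) → Module.End A (V n a)
  | 0, _, _ => 1
  | 1, _, _ => 1
  | _+2, 0, _ => 1
  | n+2, a+1, i =>
    if a + 1 = n + 2 then 1
    else if i = n + 1 then
      (iminus (n+1) a) ∘ₗ (diagOp (n+1) a n 1 qq⁻¹) ∘ₗ (pminus (n+1) a)
      + (izero (n+1) (a+1)) ∘ₗ (diagOp (n+1) (a+1) n qq 1) ∘ₗ (pzero (n+1) (a+1))
    else
      (iminus (n+1) a) ∘ₗ (KinvOp (n+1) a i) ∘ₗ (pminus (n+1) a)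
      + (izero (n+1) (a+1)) ∘ₗ (KinvOp (n+1) (a+1) i) ∘ₗ (pzero (n+1) (a+1))
/-! ### The quantum group `U_q(sl_n)` by generators and relations.

We present the algebra with `m = n - 1` generators of each kind `K i, K i⁻¹, X i⁺, X i⁻`,
indexed by `i : Fin m` (so `i` corresponds to the subscript `i + 1 ∈ {1, …, n-1}`). -/

/-- Generators of `U_q(sl_n)` (with `m = n-1`). -/
inductive UqGen (m : ℕ) : Type
  | K : Fin m → UqGen m
  | Kinv : Fin m → UqGen m
  | Xp : Fin m → UqGen m
  | Xm : Fin m → UqGen m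

/-- The free `𝔸`-algebra on the generators. -/
abbrev FA (m : ℕ) : Type := FreeAlgebra A (UqGen m)

namespace FA
variable {m : ℕ}
def K (i : Fin m) : FA m := FreeAlgebra.ι A (UqGen.K i)
def Kinv (i : Fin m) : FA m := FreeAlgebra.ι A (UqGen.Kinv i)
def Xp (i : Fin m) : FA m := FreeAlgebra.ι A (UqGen.Xp i)
def Xm (i : Fin m) : FA m := FreeAlgebra.ι A (UqGen.Xm i)
end FA

/-- The Cartan integers `(i,j)` of type `A_m`: `2` if `i = j`, `-1` if `|i-j| = 1`,
`0` if `|i-j| ≥ 2`. -/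
def cart {m : ℕ} (i j : Fin m) : ℤ :=
  if i = j then 2 else if (i : ℕ) + 1 = j ∨ (j : ℕ) + 1 = i then -1 else 0

/-- The defining relations of `U_q(sl_n)`. -/
inductive uqRel (m : ℕ) : FA m → FA m → Prop
  | KKinv (i : Fin m) : uqRel m (FA.K i * FA.Kinv i) 1
  | KinvK (i : Fin m) : uqRel m (FA.Kinv i * FA.K i) 1
  | KK (i j : Fin m) : uqRel m (FA.K i * FA.K j) (FA.K j * FA.K i)
  | KXp (i j : Fin m) : uqRel m (FA.K i * FA.Xp j) (qq ^ (cart i j) • (FA.Xp j * FA.K i))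
  | KXm (i j : Fin m) : uqRel m (FA.K i * FA.Xm j) (qq ^ (-cart i j) • (FA.Xm j * FA.K i))
  | XpXm (i j : Fin m) :
      uqRel m (FA.Xp i * FA.Xm j - FA.Xm j * FA.Xp i)
        (if i = j then (qq - qq⁻¹)⁻¹ • (FA.K i - FA.Kinv i) else 0)
  | XpXp (i j : Fin m) (h : (i : ℕ) + 2 ≤ j ∨ (j : ℕ) + 2 ≤ i) :
      uqRel m (FA.Xp i * FA.Xp j) (FA.Xp j * FA.Xp i)
  | XmXm (i j : Fin m) (h : (i : ℕ) + 2 ≤ j ∨ (j : ℕ) + 2 ≤ i) :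
      uqRel m (FA.Xm i * FA.Xm j) (FA.Xm j * FA.Xm i)
  | serreP (i j : Fin m) (h : (i : ℕ) + 1 = j ∨ (j : ℕ) + 1 = i) :
      uqRel m (FA.Xp i ^ 2 * FA.Xp j - (qq + qq⁻¹) • (FA.Xp i * FA.Xp j * FA.Xp i)
        + FA.Xp j * FA.Xp i ^ 2) 0
  | serreM (i j : Fin m) (h : (i : ℕ) + 1 = j ∨ (j : ℕ) + 1 = i) :
      uqRel m (FA.Xm i ^ 2 * FA.Xm j - (qq + qq⁻¹) • (FA.Xm i * FA.Xm j * FA.Xm i)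
        + FA.Xm j * FA.Xm i ^ 2) 0

/-- The quantum group `U_q(sl_{m+1})`, presented by generators and relations.
For `U_q(sl_n)` take `m = n - 1`. -/
abbrev Uq (m : ℕ) : Type := RingQuot (uqRel m)

namespace Uq
variable {m : ℕ}
/-- The generator `K_{i+1}` of `U_q(sl_n)`. -/
def K (i : Fin m) : Uq m := RingQuot.mkAlgHom A (uqRel m) (FA.K i)
/-- The generator `K_{i+1}⁻¹` of `U_q(sl_n)`. -/
def Kinv (i : Fin m) : Uq m := RingQuot.mkAlgHom A (uqRel m) (FA.Kinv i)
/-- The generator `X_{i+1}^+` of `U_q(sl_n)`. -/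
def Xp (i : Fin m) : Uq m := RingQuot.mkAlgHom A (uqRel m) (FA.Xp i)
/-- The generator `X_{i+1}^-` of `U_q(sl_n)`. -/
def Xm (i : Fin m) : Uq m := RingQuot.mkAlgHom A (uqRel m) (FA.Xm i)
end Uq
/-! ### The duality maps `d_{a,n}`, triple invariants, and the pivotal elements `τ`. -/

/-- The sum-of-coefficients functional on `V_a^n`. -/
def sumF (n a : ℕ) : V n a →ₗ[A] A where
  toFun f := ∑ s : BS n a, f s
  map_add' f g := by simp [Finset.sum_add_distrib]
  map_smul' c f := by simp [Finset.mul_sum]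

/-- The "trivial" map `V_a^n → (V_c^n)^*`; when `V_a^n` and `V_c^n` are one-dimensional
(`a = 0` or `a = n`, and correspondingly for `c`) it sends the basis vector to the dual
basis vector.  Used for the base cases of `d_{a,n}`. -/
def dtriv (n a c : ℕ) : V n a →ₗ[A] Module.Dual A (V n c) :=
  LinearMap.smulRight (sumF n a) (sumF n c)

/-- The map `d_{a,n} : V_a^n → (V_{n-a}^n)^*`, defined recursively by
`d_{a,n} = i₀ ∘ d_{a-1,n-1} ∘ p₋₁ + (-q)^{-a} i₋₁ ∘ d_{a,n-1} ∘ p₀`, with both base cases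
sending the basis vector to the dual basis vector.  Here `dmap n a c` has target
`(V_c^n)^*`, to be used with `c = n - a`. -/
def dmap : (n a c : ℕ) → (V n a →ₗ[A] Module.Dual A (V n c))
  | 0, a, c => dtriv 0 a c
  | n+1, 0, c => dtriv (n+1) 0 c
  | n+1, a+1, c =>
    if a + 1 = n + 1 then dtriv (n+1) (a+1) c
    else
      match c with
      | 0 => 0
      | c+1 =>
        (pzero n (c+1)).dualMap ∘ₗ (dmap n a (c+1)) ∘ₗ (pminus n a)
        + ((-qq) ^ (a+1))⁻¹ •
            ((pminus n c).dualMap ∘ₗ (dmap n (a+1) c) ∘ₗ (pzero n (a+1)))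

section voutvin

open TensorProduct

/-- First term of the recursion for `v_out`: `(-1)^c q^{b+c} (i₋₁ ⊗ i₀ ⊗ i₀)`. -/
def vterm1 (n a b c : ℕ) (v : V n a ⊗[A] (V n b ⊗[A] V n c)) :
    V (n+1) (a+1) ⊗[A] (V (n+1) b ⊗[A] V (n+1) c) :=
  ((-1 : A)^c * qq^(b+c)) •
    (TensorProduct.map (iminus n a) (TensorProduct.map (izero n b) (izero n c)) v)

/-- Second term of the recursion for `v_out`: `(-1)^a q^c (i₀ ⊗ i₋₁ ⊗ i₀)`. -/
def vterm2 (n a b c : ℕ) (v : V n a ⊗[A] (V n b ⊗[A] V n c)) :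
    V (n+1) a ⊗[A] (V (n+1) (b+1) ⊗[A] V (n+1) c) :=
  ((-1 : A)^a * qq^c) •
    (TensorProduct.map (izero n a) (TensorProduct.map (iminus n b) (izero n c)) v)

/-- Third term of the recursion for `v_out`: `(-1)^b (i₀ ⊗ i₀ ⊗ i₋₁)`. -/
def vterm3 (n a b c : ℕ) (v : V n a ⊗[A] (V n b ⊗[A] V n c)) :
    V (n+1) a ⊗[A] (V (n+1) b ⊗[A] V (n+1) (c+1)) :=
  ((-1 : A)^b) •
    (TensorProduct.map (izero n a) (TensorProduct.map (izero n b) (iminus n c)) v)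

/-- The triple invariant `v_out^n_{a,b,c} ∈ V_a^n ⊗ V_b^n ⊗ V_c^n` (intended for
`a + b + c = n`), defined by the recursion of Definition `defn:trivalent-vertices`,
omitting any term with a negative subscript. -/
def voutE : (n a b c : ℕ) → V n a ⊗[A] (V n b ⊗[A] V n c)
  | 0, _, _, _ => (fun _ => (1:A)) ⊗ₜ[A] ((fun _ => (1:A)) ⊗ₜ[A] (fun _ => (1:A)))
  | n+1, 0, 0, 0 => 0
  | n+1, a+1, 0, 0 => vterm1 n a 0 0 (voutE n a 0 0)
  | n+1, 0, b+1, 0 => vterm2 n 0 b 0 (voutE n 0 b 0)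
  | n+1, 0, 0, c+1 => vterm3 n 0 0 c (voutE n 0 0 c)
  | n+1, a+1, b+1, 0 =>
      vterm1 n a (b+1) 0 (voutE n a (b+1) 0) + vterm2 n (a+1) b 0 (voutE n (a+1) b 0)
  | n+1, a+1, 0, c+1 =>
      vterm1 n a 0 (c+1) (voutE n a 0 (c+1)) + vterm3 n (a+1) 0 c (voutE n (a+1) 0 c)
  | n+1, 0, b+1, c+1 =>
      vterm2 n 0 b (c+1) (voutE n 0 b (c+1)) + vterm3 n 0 (b+1) c (voutE n 0 (b+1) c)
  | n+1, a+1, b+1, c+1 =>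
      vterm1 n a (b+1) (c+1) (voutE n a (b+1) (c+1))
      + vterm2 n (a+1) b (c+1) (voutE n (a+1) b (c+1))
      + vterm3 n (a+1) (b+1) c (voutE n (a+1) (b+1) c)

/-- First term of the recursion for `v_in`: `(-1)^c (…) ∘ (p₋₁ ⊗ p₀ ⊗ p₀)`. -/
def wterm1 (n a b c : ℕ) (φ : V n a ⊗[A] (V n b ⊗[A] V n c) →ₗ[A] A) :
    V (n+1) (a+1) ⊗[A] (V (n+1) b ⊗[A] V (n+1) c) →ₗ[A] A :=
  ((-1 : A)^c) •
    (φ ∘ₗ TensorProduct.map (pminus n a) (TensorProduct.map (pzero n b) (pzero n c)))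

/-- Second term of the recursion for `v_in`: `(-1)^a q^{-a} (…) ∘ (p₀ ⊗ p₋₁ ⊗ p₀)`. -/
def wterm2 (n a b c : ℕ) (φ : V n a ⊗[A] (V n b ⊗[A] V n c) →ₗ[A] A) :
    V (n+1) a ⊗[A] (V (n+1) (b+1) ⊗[A] V (n+1) c) →ₗ[A] A :=
  ((-1 : A)^a * (qq^a)⁻¹) •
    (φ ∘ₗ TensorProduct.map (pzero n a) (TensorProduct.map (pminus n b) (pzero n c)))

/-- Third term of the recursion for `v_in`: `(-1)^b q^{-a-b} (…) ∘ (p₀ ⊗ p₀ ⊗ p₋₁)`. -/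
def wterm3 (n a b c : ℕ) (φ : V n a ⊗[A] (V n b ⊗[A] V n c) →ₗ[A] A) :
    V (n+1) a ⊗[A] (V (n+1) b ⊗[A] V (n+1) (c+1)) →ₗ[A] A :=
  ((-1 : A)^b * (qq^(a+b))⁻¹) •
    (φ ∘ₗ TensorProduct.map (pzero n a) (TensorProduct.map (pzero n b) (pminus n c)))

/-- The triple coinvariant `v_in^n_{a,b,c} : V_a^n ⊗ V_b^n ⊗ V_c^n → 𝔸` (intended for
`a + b + c = n`), defined recursively, omitting any term with a negative subscript. -/
def vinE : (n a b c : ℕ) → (V n a ⊗[A] (V n b ⊗[A] V n c) →ₗ[A] A)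
  | 0, a, b, c =>
      (LinearMap.mul' A A) ∘ₗ
        TensorProduct.map (sumF 0 a)
          ((LinearMap.mul' A A) ∘ₗ TensorProduct.map (sumF 0 b) (sumF 0 c))
  | n+1, 0, 0, 0 => 0
  | n+1, a+1, 0, 0 => wterm1 n a 0 0 (vinE n a 0 0)
  | n+1, 0, b+1, 0 => wterm2 n 0 b 0 (vinE n 0 b 0)
  | n+1, 0, 0, c+1 => wterm3 n 0 0 c (vinE n 0 0 c)
  | n+1, a+1, b+1, 0 =>
      wterm1 n a (b+1) 0 (vinE n a (b+1) 0) + wterm2 n (a+1) b 0 (vinE n (a+1) b 0)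
  | n+1, a+1, 0, c+1 =>
      wterm1 n a 0 (c+1) (vinE n a 0 (c+1)) + wterm3 n (a+1) 0 c (vinE n (a+1) 0 c)
  | n+1, 0, b+1, c+1 =>
      wterm2 n 0 b (c+1) (vinE n 0 b (c+1)) + wterm3 n 0 (b+1) c (vinE n 0 (b+1) c)
  | n+1, a+1, b+1, c+1 =>
      wterm1 n a (b+1) (c+1) (vinE n a (b+1) (c+1))
      + wterm2 n (a+1) b (c+1) (vinE n (a+1) b (c+1))
      + wterm3 n (a+1) (b+1) c (vinE n (a+1) (b+1) c)

end voutvin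

/-- The operator `∏_{j=1}^{n-1} K_j^j` on `V_a^n`. -/
def kjOp (n a : ℕ) : Module.End A (V n a) :=
  (List.ofFn fun i : Fin (n-1) => (KOp n a ((i : ℕ)+1)) ^ ((i : ℕ)+1)).prod

/-- The pivotal operator `τ_n = ∏_{j=1}^{n-1} K_j^{j(n-j)}` on `V_a^n`. -/
def tauOp (n a : ℕ) : Module.End A (V n a) :=
  (List.ofFn fun i : Fin (n-1) => (KOp n a ((i : ℕ)+1)) ^ (((i : ℕ)+1) * (n - ((i : ℕ)+1)))).prod

/-- The inverse pivotal operator `τ_n⁻¹ = ∏_{j=1}^{n-1} K_j^{-j(n-j)}` on `V_a^n`. -/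
def tauinvOp (n a : ℕ) : Module.End A (V n a) :=
  (List.ofFn fun i : Fin (n-1) => (KinvOp n a ((i : ℕ)+1)) ^ (((i : ℕ)+1) * (n - ((i : ℕ)+1)))).prod

/-- The element `τ_n = ∏_{j=1}^{n-1} K_j^{j(n-j)} ∈ U_q(sl_n)`. -/
def tauU (n : ℕ) : Uq (n-1) :=
  (List.ofFn fun i : Fin (n-1) => (Uq.K i) ^ (((i : ℕ)+1) * (n - ((i : ℕ)+1)))).prod

/-- The Cartan integers for literal subscripts `i, j ∈ {1, …, n-1}`. -/
def cartN (i j : ℕ) : ℤ :=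
  if i = j then 2 else if i + 1 = j ∨ j + 1 = i then -1 else 0

/-! ### Auxiliary development for statement10 -/

lemma qq_ne_zero : (qq : A) ≠ 0 := RatFunc.X_ne_zero

/-- A general diagonal operator on `V n a` with eigenvalue `qq ^ e s` on the basis
vector indexed by `s`. -/
def gdiag (n a : ℕ) (e : Finset ℕ → ℤ) : Module.End A (V n a) where
  toFun f s := qq ^ (e s.1) * f s
  map_add' f g := by funext s; simp only [Pi.add_apply]; ring
  map_smul' c f := by
    funext s; simp only [Pi.smul_apply, smul_eq_mul, RingHom.id_apply]; ring

lemma gdiag_apply (n a : ℕ) (e : Finset ℕ → ℤ) (f : V n a) (s : BS n a) :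
    gdiag n a e f s = qq ^ (e s.1) * f s := rfl

lemma apply_val {n a : ℕ} (f : V n a) (s t : BS n a) (h : s.1 = t.1) : f s = f t :=
  congrArg f (Subtype.ext h)

lemma erase_mem_aux {n a : ℕ} (s : BS (n+1) (a+1)) (h : n ∈ s.1) :
    s.1.erase n ⊆ Finset.range n ∧ (s.1.erase n).card = a := by
  constructor
  · intro x hx
    have hx' := Finset.mem_erase.mp hx
    have hx2 := s.2.1 hx'.2
    simp only [Finset.mem_range] at hx2 ⊢
    omega
  · rw [Finset.card_erase_of_mem h, s.2.2]
    omega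

lemma notmem_aux {n a : ℕ} (s : BS (n+1) a) (h : n ∉ s.1) :
    s.1 ⊆ Finset.range n ∧ s.1.card = a := by
  refine ⟨fun x hx => ?_, s.2.2⟩
  have hx2 := s.2.1 hx
  simp only [Finset.mem_range] at hx2 ⊢
  rcases Nat.lt_succ_iff_lt_or_eq.mp hx2 with h' | h'
  · exact h'
  · exact absurd (h' ▸ hx) h

lemma iminus_apply (n a : ℕ) (f : V n a) (s : BS (n+1) (a+1)) :
    iminus n a f s = if h : n ∈ s.1 then f ⟨s.1.erase n, erase_mem_aux s h⟩ else 0 := rfl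

lemma izero_apply (n a : ℕ) (f : V n a) (s : BS (n+1) a) :
    izero n a f s = if h : n ∈ s.1 then 0 else f ⟨s.1, notmem_aux s h⟩ := rfl

lemma insert_mem_aux {n a : ℕ} (t : BS n a) :
    insert n t.1 ⊆ Finset.range (n+1) ∧ (insert n t.1).card = a + 1 := by
  have hn : n ∉ t.1 := fun h => by
    have := t.2.1 h; simp [Finset.mem_range] at this
  constructor
  · intro x hx
    rcases Finset.mem_insert.mp hx with rfl | hx
    · simp
    · have := t.2.1 hx; simp only [Finset.mem_range] at this ⊢; omega
  · rw [Finset.card_insert_of_notMem hn, t.2.2]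

lemma sub_mem_aux {n a : ℕ} (t : BS n a) :
    t.1 ⊆ Finset.range (n+1) ∧ t.1.card = a := by
  refine ⟨fun x hx => ?_, t.2.2⟩
  have := t.2.1 hx; simp only [Finset.mem_range] at this ⊢; omega

lemma pminus_apply (n a : ℕ) (f : V (n+1) (a+1)) (t : BS n a) :
    pminus n a f t = f ⟨insert n t.1, insert_mem_aux t⟩ := rfl

lemma pzero_apply (n a : ℕ) (f : V (n+1) a) (t : BS n a) :
    pzero n a f t = f ⟨t.1, sub_mem_aux t⟩ := rfl

lemma gdiag_congr (n a : ℕ) {e e' : Finset ℕ → ℤ}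
    (h : ∀ s : BS n a, e s.1 = e' s.1) : gdiag n a e = gdiag n a e' := by
  apply LinearMap.ext; intro f; funext s
  simp only [gdiag_apply, h s]

lemma gdiag_one (n a : ℕ) {e : Finset ℕ → ℤ} (h : ∀ s : BS n a, e s.1 = 0) :
    gdiag n a e = 1 := by
  apply LinearMap.ext; intro f; funext s
  simp only [gdiag_apply, h s, zpow_zero, one_mul, Module.End.one_apply]

lemma gdiag_mul (n a : ℕ) (e e' : Finset ℕ → ℤ) :
    gdiag n a e * gdiag n a e' = gdiag n a (fun s => e s + e' s) := by
  apply LinearMap.ext; intro f; funext s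
  simp only [Module.End.mul_apply, gdiag_apply, zpow_add₀ qq_ne_zero]
  ring

lemma gdiag_pow (n a : ℕ) (e : Finset ℕ → ℤ) (k : ℕ) :
    gdiag n a e ^ k = gdiag n a (fun s => (k : ℤ) * e s) := by
  induction k with
  | zero =>
    rw [pow_zero]
    exact (gdiag_one n a (fun s => by push_cast; ring)).symm
  | succ k ih =>
    rw [pow_succ, ih, gdiag_mul]
    apply gdiag_congr; intro s; push_cast; ring

/-- The eigenvalue exponent of `K_i` on the basis vector `s`. -/
def cI (i : ℕ) (s : Finset ℕ) : ℤ :=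
  (if i ∈ s then 1 else 0) - (if i - 1 ∈ s then 1 else 0)

/-- Gluing a diagonal operator along the direct sum decomposition. -/
lemma glue (n a : ℕ) (e : Finset ℕ → ℤ)
    (he : ∀ s : Finset ℕ, e (s.erase n) = e s) :
    (iminus n a) ∘ₗ (gdiag n a e) ∘ₗ (pminus n a)
      + (izero n (a+1)) ∘ₗ (gdiag n (a+1) e) ∘ₗ (pzero n (a+1))
      = gdiag (n+1) (a+1) e := by
  apply LinearMap.ext; intro f; funext s
  simp only [LinearMap.add_apply, LinearMap.comp_apply, Pi.add_apply, gdiag_apply,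
    iminus_apply, izero_apply]
  by_cases h : n ∈ s.1
  · rw [dif_pos h, dif_pos h, add_zero, pminus_apply]
    rw [apply_val f _ s (by simp [Finset.insert_erase h])]
    rw [he s.1]
  · rw [dif_neg h, dif_neg h, zero_add, pzero_apply]

lemma gdiag_cI_zero (n i : ℕ) : gdiag n 0 (cI i) = 1 := by
  apply gdiag_one
  intro s
  have hs : s.1 = ∅ := Finset.card_eq_zero.mp s.2.2
  simp [cI, hs]

lemma gdiag_cI_full (n i : ℕ) (hi : 1 ≤ i) (hin : i + 1 ≤ n) : gdiag n n (cI i) = 1 := by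
  apply gdiag_one
  intro s
  have hs : s.1 = Finset.range n := by
    apply Finset.eq_of_subset_of_card_le s.2.1
    rw [s.2.2, Finset.card_range]
  simp only [cI, hs, Finset.mem_range]
  rw [if_pos (by omega), if_pos (by omega)]
  ring

lemma K_eq : ∀ n a i : ℕ, 1 ≤ i → i + 1 ≤ n → KOp n a i = gdiag n a (cI i) := by
  intro n
  induction n with
  | zero => intro a i h1 h2; omega
  | succ n ih =>
    match n with
    | 0 => intro a i h1 h2; omega
    | Nat.succ m =>
      intro a i h1 h2
      match a with
      | 0 => rw [show KOp (m+2) 0 i = 1 from rfl, gdiag_cI_zero]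
      | Nat.succ b =>
        rw [KOp]
        by_cases hb : b + 1 = m + 2
        · rw [if_pos hb]
          have hb' : b = m + 1 := by omega
          subst hb'
          exact (gdiag_cI_full (m+2) i h1 (by omega)).symm
        · rw [if_neg hb]
          by_cases hi : i = m + 1
          · rw [if_pos hi]
            subst hi
            apply LinearMap.ext; intro f; funext s
            simp only [LinearMap.add_apply, LinearMap.comp_apply, Pi.add_apply,
              gdiag_apply, iminus_apply, izero_apply]
            by_cases h : m + 1 ∈ s.1
            · rw [dif_pos h, dif_pos h, add_zero]
              have hd : diagOp (m+1) b m 1 qq ((pminus (m+1) b) f)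
                  ⟨s.1.erase (m+1), erase_mem_aux s h⟩
                  = (if m ∈ s.1.erase (m+1) then 1 else qq) *
                    (pminus (m+1) b) f ⟨s.1.erase (m+1), erase_mem_aux s h⟩ := rfl
              rw [hd, pminus_apply]
              rw [apply_val f _ s (by simp [Finset.insert_erase h])]
              have hm : m ∈ s.1.erase (m+1) ↔ m ∈ s.1 := by
                simp [Finset.mem_erase]
              simp only [cI, Nat.add_sub_cancel]
              rw [if_pos h]
              by_cases hm' : m ∈ s.1
              · rw [if_pos (hm.mpr hm'), if_pos hm']
                norm_num
              · rw [if_neg (fun c => hm' (hm.mp c)), if_neg hm']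
                norm_num
            · rw [dif_neg h, dif_neg h, zero_add]
              have hd : diagOp (m+1) (b+1) m qq⁻¹ 1 ((pzero (m+1) (b+1)) f)
                  ⟨s.1, notmem_aux s h⟩
                  = (if m ∈ s.1 then qq⁻¹ else 1) *
                    (pzero (m+1) (b+1)) f ⟨s.1, notmem_aux s h⟩ := rfl
              rw [hd, pzero_apply]
              rw [apply_val f _ s rfl]
              simp only [cI, Nat.add_sub_cancel]
              rw [if_neg h]
              by_cases hm' : m ∈ s.1
              · rw [if_pos hm', if_pos hm']
                rw [zpow_sub₀ qq_ne_zero]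
                norm_num
              · rw [if_neg hm', if_neg hm']
                norm_num
          · rw [if_neg hi]
            have hi2 : i + 1 ≤ m + 1 := by omega
            rw [ih b i h1 hi2, ih (b+1) i h1 hi2]
            apply glue
            intro t
            have h1' : (i ∈ t.erase (m+1)) = (i ∈ t) := by
              simp [Finset.mem_erase]; intro hc; omega
            have h2' : (i - 1 ∈ t.erase (m+1)) = (i - 1 ∈ t) := by
              simp [Finset.mem_erase]; intro hc; omega
            simp [cI, h1', h2']

lemma prod_gdiag (n a : ℕ) : ∀ (m : ℕ) (e : Fin m → Finset ℕ → ℤ),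
    (List.ofFn fun i => gdiag n a (e i)).prod = gdiag n a (fun s => ∑ i, e i s) := by
  intro m
  induction m with
  | zero =>
    intro e
    simp only [List.ofFn_zero, List.prod_nil]
    exact (gdiag_one n a (fun s => by simp)).symm
  | succ m ih =>
    intro e
    rw [List.ofFn_succ, List.prod_cons, ih (fun i => e i.succ), gdiag_mul]
    apply gdiag_congr
    intro s
    rw [Fin.sum_univ_succ]

lemma tauOp_eq_sum (n a : ℕ) :
    tauOp n a = gdiag n a (fun s => ∑ i ∈ Finset.range (n-1),
      (((i+1) * (n - (i+1)) : ℕ) : ℤ) * cI (i+1) s) := by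
  rw [tauOp]
  have h : (fun i : Fin (n-1) => (KOp n a ((i : ℕ)+1)) ^ (((i : ℕ)+1) * (n - ((i : ℕ)+1))))
      = fun i : Fin (n-1) => gdiag n a
          (fun s => (((((i : ℕ)+1) * (n - ((i : ℕ)+1))) : ℕ) : ℤ) * cI ((i : ℕ)+1) s) := by
    funext i
    rw [K_eq n a ((i : ℕ)+1) (by omega) (by have := i.2; omega), gdiag_pow]
  rw [h, prod_gdiag]
  apply gdiag_congr
  intro s
  exact Fin.sum_univ_eq_sum_range
    (fun i => (((i+1) * (n - (i+1)) : ℕ) : ℤ) * cI (i+1) s.1) (n-1)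

lemma abelA (m : ℕ) (χ : ℕ → ℤ) :
    ∑ i ∈ Finset.range m, ((i : ℤ)+1) * (χ (i+1) - χ i)
      = m * χ m - ∑ j ∈ Finset.range m, χ j := by
  induction m with
  | zero => simp
  | succ m ih =>
    rw [Finset.sum_range_succ, ih, Finset.sum_range_succ (f := χ)]
    push_cast
    ring

lemma telescope (m : ℕ) (χ : ℕ → ℤ) :
    ∑ i ∈ Finset.range m, ((i : ℤ)+1) * ((m : ℤ) - i) * (χ (i+1) - χ i)
      = ∑ j ∈ Finset.range (m+1), (2*(j : ℤ) - m) * χ j := by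
  induction m with
  | zero => simp
  | succ m ih =>
    have hL : ∑ i ∈ Finset.range (m+1), ((i : ℤ)+1) * (((m : ℤ)+1) - i) * (χ (i+1) - χ i)
        = (∑ i ∈ Finset.range (m+1), ((i : ℤ)+1) * ((m : ℤ) - i) * (χ (i+1) - χ i))
          + ∑ i ∈ Finset.range (m+1), ((i : ℤ)+1) * (χ (i+1) - χ i) := by
      rw [← Finset.sum_add_distrib]
      apply Finset.sum_congr rfl
      intro i _
      ring
    have h0 : ∑ i ∈ Finset.range (m+1), ((i : ℤ)+1) * ((m : ℤ) - i) * (χ (i+1) - χ i)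
        = ∑ i ∈ Finset.range m, ((i : ℤ)+1) * ((m : ℤ) - i) * (χ (i+1) - χ i) := by
      rw [Finset.sum_range_succ]
      have : ((m : ℤ)+1) * ((m : ℤ) - m) * (χ (m+1) - χ m) = 0 := by ring
      rw [this, add_zero]
    have hR : ∑ j ∈ Finset.range (m+2), (2*(j : ℤ) - ((m : ℤ)+1)) * χ j
        = (∑ j ∈ Finset.range (m+1), (2*(j : ℤ) - m) * χ j)
          - (∑ j ∈ Finset.range (m+1), χ j) + ((m : ℤ)+1) * χ (m+1) := by
      rw [Finset.sum_range_succ, ← Finset.sum_sub_distrib]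
      have : ∑ j ∈ Finset.range (m+1), ((2*(j : ℤ) - m) * χ j - χ j)
          = ∑ j ∈ Finset.range (m+1), (2*(j : ℤ) - ((m : ℤ)+1)) * χ j := by
        apply Finset.sum_congr rfl
        intro j _
        ring
      rw [this]
      push_cast
      ring
    calc ∑ i ∈ Finset.range (m+1), ((i : ℤ)+1) * (((m : ℤ)+1) - i) * (χ (i+1) - χ i)
        = (∑ i ∈ Finset.range m, ((i : ℤ)+1) * ((m : ℤ) - i) * (χ (i+1) - χ i))
          + ∑ i ∈ Finset.range (m+1), ((i : ℤ)+1) * (χ (i+1) - χ i) := by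
          rw [hL, h0]
      _ = (∑ j ∈ Finset.range (m+1), (2*(j : ℤ) - m) * χ j)
          + (((m : ℤ)+1) * χ (m+1) - ∑ j ∈ Finset.range (m+1), χ j) := by
          rw [ih, abelA (m+1) χ]
          push_cast
          ring
      _ = ∑ j ∈ Finset.range (m+2), (2*(j : ℤ) - ((m : ℤ)+1)) * χ j := by
          rw [hR]; ring

/-- The closed-form exponent of `τ_n` on the basis vector `s`. -/
def Etau (n : ℕ) (s : Finset ℕ) : ℤ :=
  ∑ j ∈ Finset.range n, (2*(j : ℤ) + 1 - n) * (if j ∈ s then 1 else 0)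

lemma Eclosed (n : ℕ) (s : Finset ℕ) :
    ∑ i ∈ Finset.range (n-1), (((i+1) * (n - (i+1)) : ℕ) : ℤ) * cI (i+1) s
      = Etau n s := by
  match n with
  | 0 => simp [Etau]
  | Nat.succ m =>
    have h : ∑ i ∈ Finset.range (m+1-1), (((i+1) * (m+1 - (i+1)) : ℕ) : ℤ) * cI (i+1) s
        = ∑ i ∈ Finset.range m, ((i : ℤ)+1) * ((m : ℤ) - i) *
            ((if i+1 ∈ s then (1 : ℤ) else 0) - (if i ∈ s then 1 else 0)) := by
      apply Finset.sum_congr (by norm_num)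
      intro i hi
      have him : i < m := Finset.mem_range.mp hi
      have hc : ((((i+1) * (m+1 - (i+1))) : ℕ) : ℤ) = ((i : ℤ)+1) * ((m : ℤ) - i) := by
        have : (m+1 - (i+1) : ℕ) = m - i := by omega
        rw [this]
        push_cast [Nat.cast_sub (le_of_lt him)]
        ring
      rw [hc, cI, Nat.add_sub_cancel]
    rw [h, telescope m (fun j => if j ∈ s then (1 : ℤ) else 0)]
    apply Finset.sum_congr rfl
    intro j _
    push_cast
    ring

lemma tauOp_eq (n a : ℕ) : tauOp n a = gdiag n a (Etau n) := by
  rw [tauOp_eq_sum]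
  apply gdiag_congr
  intro s
  exact Eclosed n s.1

lemma indicator_sum (n : ℕ) (s : Finset ℕ) (hs : s ⊆ Finset.range n) :
    ∑ j ∈ Finset.range n, (if j ∈ s then (1 : ℤ) else 0) = s.card := by
  rw [Finset.sum_ite_mem, Finset.inter_comm, Finset.inter_eq_left.mpr hs]
  simp

lemma fact1 {n a : ℕ} (s : BS (n+1) (a+1)) (h : n ∈ s.1) :
    Etau (n+1) s.1 = ((n : ℤ) - a) + Etau n (s.1.erase n) := by
  have hcard : (s.1.erase n).card = a := by
    rw [Finset.card_erase_of_mem h, s.2.2]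
    omega
  have hsub : s.1.erase n ⊆ Finset.range n := (erase_mem_aux s h).1
  have hmem : ∀ j, j ∈ Finset.range n → ((if j ∈ s.1 then (1:ℤ) else 0)
      = if j ∈ s.1.erase n then 1 else 0) := by
    intro j hj
    have : j ≠ n := by have := Finset.mem_range.mp hj; omega
    simp [Finset.mem_erase, this]
  rw [Etau, Finset.sum_range_succ, if_pos h]
  push_cast
  have hsplit : ∑ j ∈ Finset.range n, (2*(j : ℤ) + 1 - (n+1)) * (if j ∈ s.1 then 1 else 0)
      = (∑ j ∈ Finset.range n, (2*(j : ℤ) + 1 - n) * (if j ∈ s.1.erase n then 1 else 0))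
        - ∑ j ∈ Finset.range n, (if j ∈ s.1.erase n then (1:ℤ) else 0) := by
    rw [← Finset.sum_sub_distrib]
    apply Finset.sum_congr rfl
    intro j hj
    rw [hmem j hj]
    push_cast
    ring
  rw [hsplit, indicator_sum n _ hsub, hcard, Etau]
  push_cast
  ring

lemma fact2 {n a : ℕ} (s : BS (n+1) (a+1)) (h : n ∉ s.1) :
    Etau (n+1) s.1 = (-((a : ℤ)+1)) + Etau n s.1 := by
  have hsub : s.1 ⊆ Finset.range n := (notmem_aux s h).1
  rw [Etau, Finset.sum_range_succ, if_neg h]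
  push_cast
  have hsplit : ∑ j ∈ Finset.range n, (2*(j : ℤ) + 1 - (n+1)) * (if j ∈ s.1 then 1 else 0)
      = (∑ j ∈ Finset.range n, (2*(j : ℤ) + 1 - n) * (if j ∈ s.1 then 1 else 0))
        - ∑ j ∈ Finset.range n, (if j ∈ s.1 then (1:ℤ) else 0) := by
    rw [← Finset.sum_sub_distrib]
    apply Finset.sum_congr rfl
    intro j hj
    push_cast
    ring
  rw [hsplit, indicator_sum n _ hsub, s.2.2, Etau]
  push_cast
  ring

/-- for every `n ≥ 1` and `0 ≤ a ≤ n`, the pivotal operator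
`τ_n = ∏_{j=1}^{n-1} K_j^{j(n-j)}` on `V_a^n` satisfies
`τ_n = q^{n-a} i₋₁ τ_{n-1} p₋₁ + q^{-a} i₀ τ_{n-1} p₀`.
The first conjunct covers all `1 ≤ a ≤ n` (with rank `n+1` and index `a+1`); the second
covers `a = 0`, where the summand `V_{-1}^{n-1}` is zero and the corresponding term of the
formula vanishes. -/
theorem statement10 :
    (∀ n a : ℕ, a + 1 ≤ n + 1 →
      tauOp (n+1) (a+1)
        = qq ^ (((n : ℤ) + 1) - ((a : ℤ) + 1)) • (iminus n a ∘ₗ tauOp n a ∘ₗ pminus n a)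
          + qq ^ (-((a : ℤ) + 1)) •
              (izero n (a+1) ∘ₗ tauOp n (a+1) ∘ₗ pzero n (a+1))) ∧
    (∀ n : ℕ,
      tauOp (n+1) 0
        = qq ^ (-(0 : ℤ)) • (izero n 0 ∘ₗ tauOp n 0 ∘ₗ pzero n 0)) := by
  constructor
  · intro n a ha
    rw [tauOp_eq, tauOp_eq, tauOp_eq]
    apply LinearMap.ext; intro f; funext s
    simp only [LinearMap.add_apply, LinearMap.smul_apply, LinearMap.comp_apply,
      Pi.add_apply, Pi.smul_apply, smul_eq_mul, gdiag_apply, iminus_apply, izero_apply]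
    by_cases h : n ∈ s.1
    · rw [dif_pos h, dif_pos h, mul_zero, add_zero, pminus_apply]
      rw [show (⟨insert n ((s.1).erase n), insert_mem_aux ⟨(s.1).erase n, erase_mem_aux s h⟩⟩
        : BS (n+1) (a+1)) = s from Subtype.ext (Finset.insert_erase h)]
      rw [fact1 s h, zpow_add₀ qq_ne_zero,
        show (((n : ℤ)+1)-((a : ℤ)+1)) = (n : ℤ)-(a : ℤ) from by ring]
      ring
    · rw [dif_neg h, dif_neg h, mul_zero, zero_add, pzero_apply]
      rw [fact2 s h, zpow_add₀ qq_ne_zero]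
      ring
  · intro n
    rw [tauOp_eq, tauOp_eq]
    apply LinearMap.ext; intro f; funext s
    have hs : s.1 = ∅ := Finset.card_eq_zero.mp s.2.2
    have h : n ∉ s.1 := by simp [hs]
    simp only [LinearMap.smul_apply, LinearMap.comp_apply, Pi.smul_apply, smul_eq_mul,
      gdiag_apply, izero_apply]
    rw [dif_neg h, pzero_apply]
    have e1 : Etau (n+1) s.1 = 0 := by simp [Etau, hs]
    have e2 : Etau n s.1 = 0 := by simp [Etau, hs]
    rw [e1, e2]
    simp


end
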